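/- For a compactly supported probability measure μ on ℝ with Cauchy transform G, and any z in the upper half-plane, the quantity (G(z) − G(w̄))/(z − w̄) + G(z)G(w̄) equals minus the integral ∫ f(x)·(1/(z−x) − G(z))·(1/(w̄−x) − G(w̄)) dμ(x); consequently the kernel (z,w) ↦ (G(z)−G(w̄))/(z−w̄) + G(z)G(w̄) on (ℂ∖ℝ)² is negative semi-definite: for all z₁,…,zₙ ∈ ℂ∖ℝ and c₁,…,cₙ ∈ ℂ, Σⱼₖ cⱼ c̄ₖ [(G(zⱼ)−G(z̄ₖ))/(zⱼ−z̄ₖ) + G(zⱼ)G(z̄ₖ)] ≤ 0. -/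

import Mathlib

open MeasureTheory Complex Metric



lemma sub_ofReal_ne {z : ℂ} (hz : z.im ≠ 0) (x : ℝ) : z - (x : ℂ) ≠ 0 := by
  intro h; apply hz; have := congrArg Complex.im h; simpa using this

lemma res_cont {z : ℂ} (hz : z.im ≠ 0) : Continuous (fun x : ℝ => (z - (x : ℂ))⁻¹) :=
  (continuous_const.sub Complex.continuous_ofReal).inv₀ (fun x => sub_ofReal_ne hz x)

lemma res_bound {z : ℂ} (hz : z.im ≠ 0) (x : ℝ) : ‖(z - (x : ℂ))⁻¹‖ ≤ |z.im|⁻¹ := by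
  rw [norm_inv]
  have h1 : |z.im| ≤ ‖z - (x:ℂ)‖ := by simpa using Complex.abs_im_le_norm (z - (x:ℂ))
  exact inv_anti₀ (abs_pos.2 hz) h1

lemma res_int (μ : Measure ℝ) [IsProbabilityMeasure μ] {z : ℂ} (hz : z.im ≠ 0) :
    Integrable (fun x : ℝ => (z - (x : ℂ))⁻¹) μ := by
  refine Integrable.mono' (integrable_const (|z.im|⁻¹)) (res_cont hz).aestronglyMeasurable ?_
  exact Filter.Eventually.of_forall (fun x => res_bound hz x)

lemma prod_int (μ : Measure ℝ) [IsProbabilityMeasure μ] {z w : ℂ} (hz : z.im ≠ 0)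
    (hw : w.im ≠ 0) (a b : ℂ) :
    Integrable (fun x : ℝ => ((z - (x : ℂ))⁻¹ - a) * ((w - (x : ℂ))⁻¹ - b)) μ := by
  refine Integrable.mono' (integrable_const ((|z.im|⁻¹ + ‖a‖) * (|w.im|⁻¹ + ‖b‖)))
    ((((res_cont hz).sub continuous_const).mul
      ((res_cont hw).sub continuous_const)).aestronglyMeasurable) ?_
  refine Filter.Eventually.of_forall (fun x => ?_)
  calc ‖((z - (x:ℂ))⁻¹ - a) * ((w - (x:ℂ))⁻¹ - b)‖
      ≤ ‖(z - (x:ℂ))⁻¹ - a‖ * ‖(w - (x:ℂ))⁻¹ - b‖ := norm_mul_le _ _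
    _ ≤ (|z.im|⁻¹ + ‖a‖) * (|w.im|⁻¹ + ‖b‖) := by
        apply mul_le_mul _ _ (norm_nonneg _) (by positivity)
        · exact (norm_sub_le _ _).trans (by gcongr; exact res_bound hz x)
        · exact (norm_sub_le _ _).trans (by gcongr; exact res_bound hw x)

lemma hasDeriv_G (μ : Measure ℝ) [IsProbabilityMeasure μ] {z : ℂ} (hz : z.im ≠ 0) :
    HasDerivAt (fun w : ℂ => ∫ x : ℝ, (w - (x : ℂ))⁻¹ ∂μ)
      (∫ x : ℝ, -((z - (x : ℂ))⁻¹) ^ 2 ∂μ) z := by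
  have hε : 0 < |z.im| / 2 := by positivity
  have him : ∀ w ∈ ball z (|z.im| / 2), |z.im| / 2 ≤ |w.im| := by
    intro w hw
    have h1 : |z.im - w.im| ≤ ‖z - w‖ := by simpa using Complex.abs_im_le_norm (z - w)
    have h2 : ‖z - w‖ < |z.im| / 2 := by
      rw [mem_ball, dist_eq_norm] at hw; rw [norm_sub_rev]; exact hw
    linarith [abs_sub_abs_le_abs_sub z.im w.im, h1.trans_lt h2]
  have key := hasDerivAt_integral_of_dominated_loc_of_deriv_le (μ := μ)
      (F := fun w (x : ℝ) => (w - (x : ℂ))⁻¹)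
      (F' := fun w (x : ℝ) => -((w - (x : ℂ))⁻¹) ^ 2)
      (x₀ := z) (bound := fun _ => ((|z.im| / 2)⁻¹) ^ 2) (ball_mem_nhds z hε)
      ?_ (res_int μ hz) ?_ ?_ (integrable_const _) ?_
  · exact key.2
  · refine Filter.eventually_of_mem (ball_mem_nhds z hε) (fun w hw => ?_)
    have hwim : w.im ≠ 0 := abs_pos.mp (hε.trans_le (him w hw))
    exact (res_cont hwim).aestronglyMeasurable
  · exact (((res_cont hz).pow 2).neg).aestronglyMeasurable
  · refine Filter.Eventually.of_forall (fun x => fun w hw => ?_)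
    have hwim : w.im ≠ 0 := abs_pos.mp (hε.trans_le (him w hw))
    have h1 : ‖(w - (x:ℂ))⁻¹‖ ≤ (|z.im| / 2)⁻¹ :=
      (res_bound hwim x).trans (inv_anti₀ hε (him w hw))
    calc ‖-((w - (x:ℂ))⁻¹) ^ 2‖ = ‖(w - (x:ℂ))⁻¹‖ ^ 2 := by rw [norm_neg, norm_pow]
      _ ≤ ((|z.im| / 2)⁻¹) ^ 2 := by gcongr
  · refine Filter.Eventually.of_forall (fun x => fun w hw => ?_)
    have hwim : w.im ≠ 0 := abs_pos.mp (hε.trans_le (him w hw))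
    have hne := sub_ofReal_ne hwim x
    have h0 : HasDerivAt (fun u : ℂ => u - (x : ℂ)) 1 w := (hasDerivAt_id w).sub_const _
    have h2 := h0.inv hne
    convert h2 using 1
    · rfl
    · rfl
    · rw [neg_div, one_div, inv_pow]

lemma ker_formula (μ : Measure ℝ) [IsProbabilityMeasure μ]
    (G : ℂ → ℂ) (hG : ∀ z : ℂ, G z = ∫ x : ℝ, (z - (x : ℂ))⁻¹ ∂μ)
    (ker : ℂ → ℂ → ℂ)
    (hker : ∀ z w : ℂ, ker z w =
      if z = w then deriv G z + G z * G z
      else (G z - G w) / (z - w) + G z * G w)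
    {z w : ℂ} (hz : z.im ≠ 0) (hw : w.im ≠ 0) :
    ker z w = - ∫ x : ℝ, ((z - (x : ℂ))⁻¹ - G z) * ((w - (x : ℂ))⁻¹ - G w) ∂μ := by
  have expand : (∫ x : ℝ, ((z - (x:ℂ))⁻¹ - G z) * ((w - (x:ℂ))⁻¹ - G w) ∂μ)
      = (∫ x : ℝ, (z - (x:ℂ))⁻¹ * (w - (x:ℂ))⁻¹ ∂μ) - G z * G w := by
    have h1 : ∀ x : ℝ, ((z - (x:ℂ))⁻¹ - G z) * ((w - (x:ℂ))⁻¹ - G w)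
        = (z - (x:ℂ))⁻¹ * (w - (x:ℂ))⁻¹
          - (G z * (w - (x:ℂ))⁻¹ + G w * (z - (x:ℂ))⁻¹ - G z * G w) := fun x => by ring
    have hAB : Integrable (fun x : ℝ => (z - (x:ℂ))⁻¹ * (w - (x:ℂ))⁻¹) μ := by
      have := prod_int μ hz hw 0 0; simpa using this
    have hrest : Integrable (fun x : ℝ =>
        G z * (w - (x:ℂ))⁻¹ + G w * (z - (x:ℂ))⁻¹ - G z * G w) μ :=
      (((res_int μ hw).const_mul _).add ((res_int μ hz).const_mul _)).sub (integrable_const _)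
    have hadd : Integrable (fun x : ℝ =>
        G z * (w - (x:ℂ))⁻¹ + G w * (z - (x:ℂ))⁻¹) μ :=
      ((res_int μ hw).const_mul _).add ((res_int μ hz).const_mul _)
    have h2 : (∫ x : ℝ, (G z * (w - (x:ℂ))⁻¹ + G w * (z - (x:ℂ))⁻¹ - G z * G w) ∂μ)
        = G z * G w := by
      rw [integral_sub hadd (integrable_const _),
        integral_add ((res_int μ hw).const_mul _) ((res_int μ hz).const_mul _),
        integral_const_mul, integral_const_mul, ← hG z, ← hG w, integral_const]
      simp only [probReal_univ, one_smul]
      ring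
    simp_rw [h1]
    rw [integral_sub hAB hrest, h2]
  by_cases hzw : z = w
  · subst hzw
    have hderiv : deriv G z = ∫ x : ℝ, -((z - (x:ℂ))⁻¹) ^ 2 ∂μ := by
      have hfun : G = fun w => ∫ x : ℝ, (w - (x:ℂ))⁻¹ ∂μ := funext hG
      rw [hfun]
      exact (hasDeriv_G μ hz).deriv
    rw [hker z z, if_pos rfl, hderiv, expand, integral_neg]
    have h2 : (∫ x : ℝ, (z - (x:ℂ))⁻¹ * (z - (x:ℂ))⁻¹ ∂μ)
        = ∫ x : ℝ, ((z - (x:ℂ))⁻¹) ^ 2 ∂μ := by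
      congr 1; funext x; ring
    rw [h2]; ring
  · have hwz : w - z ≠ 0 := sub_ne_zero.2 (Ne.symm hzw)
    have hzw' : z - w ≠ 0 := sub_ne_zero.2 hzw
    have hAB : (∫ x : ℝ, (z - (x:ℂ))⁻¹ * (w - (x:ℂ))⁻¹ ∂μ) = (w - z)⁻¹ * (G z - G w) := by
      have hpf : ∀ x : ℝ, (z - (x:ℂ))⁻¹ * (w - (x:ℂ))⁻¹
          = (w - z)⁻¹ * ((z - (x:ℂ))⁻¹ - (w - (x:ℂ))⁻¹) := by
        intro x
        have hzx := sub_ofReal_ne hz x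
        have hwx := sub_ofReal_ne hw x
        field_simp
        try ring
      simp_rw [hpf]
      rw [integral_const_mul, integral_sub (res_int μ hz) (res_int μ hw), ← hG z, ← hG w]
    rw [hker z w, if_neg hzw, expand, hAB]
    field_simp
    try ring

/-- The covariance-of-resolvents formula and negative semi-definiteness of the kernel
`(z,w) ↦ (G(z) − G(w̄))/(z − w̄) + G(z)G(w̄)`, with the removable singularity at `z = w̄`
interpreted as `G'(z) + G(z)²`. -/
theorem resolvent_kernel_negSemidef
    (μ : Measure ℝ) [IsProbabilityMeasure μ]
    (K : Set ℝ) (hK : IsCompact K) (hμK : μ Kᶜ = 0)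
    (G : ℂ → ℂ) (hG : ∀ z : ℂ, G z = ∫ x : ℝ, (z - (x : ℂ))⁻¹ ∂μ)
    (ker : ℂ → ℂ → ℂ)
    (hker : ∀ z w : ℂ, ker z w =
      if z = w then deriv G z + G z * G z
      else (G z - G w) / (z - w) + G z * G w) :
    (∀ z w : ℂ, 0 < z.im → 0 < w.im →
      ker z (starRingEnd ℂ w)
        = - ∫ x : ℝ, ((z - (x : ℂ))⁻¹ - G z) *
            ((starRingEnd ℂ w - (x : ℂ))⁻¹ - G (starRingEnd ℂ w)) ∂μ)
    ∧ (∀ (n : ℕ) (z : Fin n → ℂ) (c : Fin n → ℂ), (∀ j, (z j).im ≠ 0) →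
        (∑ j : Fin n, ∑ k : Fin n,
            c j * starRingEnd ℂ (c k) * ker (z j) (starRingEnd ℂ (z k))).re ≤ 0
        ∧ (∑ j : Fin n, ∑ k : Fin n,
            c j * starRingEnd ℂ (c k) * ker (z j) (starRingEnd ℂ (z k))).im = 0) := by
  have hconjim : ∀ {v : ℂ}, v.im ≠ 0 → (starRingEnd ℂ v).im ≠ 0 := by
    intro v hv
    simp only [Complex.conj_im, ne_eq, neg_eq_zero]
    exact hv
  constructor
  · intro z w hz hw
    exact ker_formula μ G hG ker hker (ne_of_gt hz) (hconjim (ne_of_gt hw))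
  · intro n z c hz
    have hGconj : ∀ v : ℂ, G (starRingEnd ℂ v) = starRingEnd ℂ (G v) := by
      intro v
      rw [hG, hG, ← integral_conj]
      congr 1; funext x
      simp [map_inv₀, map_sub, Complex.conj_ofReal]
    have hconj_term : ∀ (k : Fin n) (x : ℝ),
        ((starRingEnd ℂ (z k)) - (x:ℂ))⁻¹ - G (starRingEnd ℂ (z k))
          = starRingEnd ℂ ((z k - (x:ℂ))⁻¹ - G (z k)) := by
      intro k x
      rw [hGconj]
      simp [map_sub, map_inv₀, Complex.conj_ofReal]
    -- integrability of each cross term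
    have hint : ∀ j k : Fin n, Integrable (fun x : ℝ =>
        (c j * ((z j - (x:ℂ))⁻¹ - G (z j))) *
        starRingEnd ℂ (c k * ((z k - (x:ℂ))⁻¹ - G (z k)))) μ := by
      intro j k
      refine ((prod_int μ (hz j) (hconjim (hz k)) (G (z j))
          (G (starRingEnd ℂ (z k)))).const_mul
          (c j * starRingEnd ℂ (c k))).congr
        (Filter.Eventually.of_forall (fun x => ?_))
      simp only [hconj_term, map_mul]
      ring
    have hintneg : ∀ j k : Fin n, Integrable (fun x : ℝ =>
        -((c j * ((z j - (x:ℂ))⁻¹ - G (z j))) *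
          starRingEnd ℂ (c k * ((z k - (x:ℂ))⁻¹ - G (z k))))) μ :=
      fun j k => (hint j k).neg
    have key : (∑ j : Fin n, ∑ k : Fin n,
          c j * starRingEnd ℂ (c k) * ker (z j) (starRingEnd ℂ (z k)))
        = - ((∫ x : ℝ, Complex.normSq
            (∑ j : Fin n, c j * ((z j - (x:ℂ))⁻¹ - G (z j))) ∂μ : ℝ) : ℂ) := by
      have e1 : ∀ j k : Fin n, c j * starRingEnd ℂ (c k) * ker (z j) (starRingEnd ℂ (z k))
          = ∫ x : ℝ, -((c j * ((z j - (x:ℂ))⁻¹ - G (z j))) *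
              starRingEnd ℂ (c k * ((z k - (x:ℂ))⁻¹ - G (z k)))) ∂μ := by
        intro j k
        rw [ker_formula μ G hG ker hker (hz j) (hconjim (hz k)), mul_neg,
          ← integral_const_mul, ← integral_neg]
        congr 1; funext x
        simp only [hconj_term, map_mul]
        ring
      calc (∑ j : Fin n, ∑ k : Fin n,
              c j * starRingEnd ℂ (c k) * ker (z j) (starRingEnd ℂ (z k)))
          = ∑ j : Fin n, ∫ x : ℝ, ∑ k : Fin n,
              -((c j * ((z j - (x:ℂ))⁻¹ - G (z j))) *
                starRingEnd ℂ (c k * ((z k - (x:ℂ))⁻¹ - G (z k)))) ∂μ := by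
            refine Finset.sum_congr rfl (fun j _ => ?_)
            rw [integral_finset_sum _ (fun k _ => hintneg j k)]
            exact Finset.sum_congr rfl (fun k _ => e1 j k)
        _ = ∫ x : ℝ, ∑ j : Fin n, ∑ k : Fin n,
              -((c j * ((z j - (x:ℂ))⁻¹ - G (z j))) *
                starRingEnd ℂ (c k * ((z k - (x:ℂ))⁻¹ - G (z k)))) ∂μ := by
            rw [integral_finset_sum _ (fun j _ =>
              integrable_finset_sum _ (fun k _ => hintneg j k))]
        _ = ∫ x : ℝ, -((Complex.normSq
              (∑ j : Fin n, c j * ((z j - (x:ℂ))⁻¹ - G (z j))) : ℝ) : ℂ) ∂μ := by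
            congr 1; funext x
            rw [← Complex.mul_conj, map_sum, Finset.sum_mul_sum]
            simp [Finset.sum_neg_distrib]
        _ = - ((∫ x : ℝ, Complex.normSq
              (∑ j : Fin n, c j * ((z j - (x:ℂ))⁻¹ - G (z j))) ∂μ : ℝ) : ℂ) := by
            rw [integral_neg]
            exact congrArg (fun t => -t) (integral_ofReal (𝕜 := ℂ))
    rw [key]
    constructor
    · simp only [Complex.neg_re, Complex.ofReal_re, neg_nonpos]
      exact integral_nonneg (fun x => Complex.normSq_nonneg _)
    · simp
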